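/- Let ψ : V → Ṽ be a similarity of ratio c ∈ F^× with Clifford extension Cl(ψ). If m is a homogeneous invertible element of Cl(V,Q), then Cl(ψ)(m)·Cl(ψ)(m⁻¹) = c^{∂m}; in particular Cl(ψ)(m) is invertible in Cl(Ṽ,Q̃). -/

import Mathlib

open CliffordAlgebra

-- inverse of a homogeneous unit is homogeneous of the same degree
lemma inv_mem_evenOdd {F V : Type*} [Field F] [AddCommGroup V] [Module F V]
    (Q : QuadraticForm F V) (u : (CliffordAlgebra Q)ˣ) (i : ZMod 2)
    (hu : (u : CliffordAlgebra Q) ∈ evenOdd Q i) :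
    ((u⁻¹ : (CliffordAlgebra Q)ˣ) : CliffordAlgebra Q) ∈ evenOdd Q i := by
  classical
  set v : CliffordAlgebra Q := ((u⁻¹ : (CliffordAlgebra Q)ˣ) : CliffordAlgebra Q) with hv
  set a : CliffordAlgebra Q := ((DirectSum.decompose (evenOdd Q) v i : evenOdd Q i) : CliffordAlgebra Q) with ha
  set b : CliffordAlgebra Q := ((DirectSum.decompose (evenOdd Q) v (i+1) : evenOdd Q (i+1)) : CliffordAlgebra Q) with hb
  have hcases := (by decide : ∀ j : ZMod 2, j = 0 ∨ j = 1)
  have hamem : a ∈ evenOdd Q i := SetLike.coe_mem _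
  have hbmem : b ∈ evenOdd Q (i+1) := SetLike.coe_mem _
  have hsum : a + b = v := by
    have h := DirectSum.sum_support_decompose (evenOdd Q) v
    have h2 : ∑ j : ZMod 2, ((DirectSum.decompose (evenOdd Q) v j : evenOdd Q j) : CliffordAlgebra Q) = v := by
      refine Eq.trans ?_ h
      symm
      apply Finset.sum_subset (Finset.subset_univ _)
      intro j _ hj
      simp only [DFinsupp.mem_support_iff, not_not] at hj
      rw [hj]; rfl
    rw [show (Finset.univ : Finset (ZMod 2)) = {0, 1} from by decide,
      Finset.sum_insert (by decide), Finset.sum_singleton] at h2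
    rcases hcases i with rfl | rfl
    · rw [ha, hb, show (0 : ZMod 2) + 1 = 1 from by decide]; simpa using h2
    · rw [ha, hb, show (1 : ZMod 2) + 1 = 0 from by decide, add_comm]
      simpa using h2
  -- u * b is the degree (i + (i+1)) component of 1
  have hub : (u : CliffordAlgebra Q) * b ∈ evenOdd Q (i + (i + 1)) :=
    SetLike.mul_mem_graded hu hbmem
  have hua : (u : CliffordAlgebra Q) * a ∈ evenOdd Q (i + i) :=
    SetLike.mul_mem_graded hu hamem
  have hii : i + i = 0 := by rcases hcases i with rfl | rfl <;> decide
  have hione : i + (i + 1) = 1 := by rcases hcases i with rfl | rfl <;> decide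
  rw [hii] at hua
  rw [hione] at hub
  have hone : (u : CliffordAlgebra Q) * a + (u : CliffordAlgebra Q) * b = 1 := by
    rw [← mul_add, hsum, hv, Units.mul_inv]
  have hb0 : (u : CliffordAlgebra Q) * b = 0 := by
    have e1 : ((DirectSum.decompose (evenOdd Q)
          ((u : CliffordAlgebra Q) * a + (u : CliffordAlgebra Q) * b) 1 : evenOdd Q 1) :
        CliffordAlgebra Q) = (u : CliffordAlgebra Q) * b := by
      simp only [DirectSum.decompose_add, DirectSum.add_apply, Submodule.coe_add,
        DirectSum.decompose_of_mem_ne (evenOdd Q) hua (show (0:ZMod 2) ≠ 1 by decide),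
        DirectSum.decompose_of_mem_same (evenOdd Q) hub, ZeroMemClass.coe_zero, zero_add]
    rw [hone] at e1
    rw [← e1]
    exact DirectSum.decompose_of_mem_ne (evenOdd Q) (SetLike.one_mem_graded _)
      (show (0 : ZMod 2) ≠ 1 by decide)
  have : b = 0 := by
    calc b = ((u⁻¹ : (CliffordAlgebra Q)ˣ) : CliffordAlgebra Q) * ((u : CliffordAlgebra Q) * b) := by
          rw [← mul_assoc, Units.inv_mul, one_mul]
    _ = 0 := by rw [hb0, mul_zero]
  rw [← hsum, this, add_zero]
  exact hamem

/-- If `m` is a homogeneous invertible element of `Cl(V,Q)` of degree `∂m`, then the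
Clifford extension `Cl(ψ)` of a similarity of ratio `c` satisfies
`Cl(ψ)(m)·Cl(ψ)(m⁻¹) = c^{∂m}`; in particular `Cl(ψ)(m)` is invertible. -/
theorem clifford_extension_invertible {F V W : Type*} [Field F]
    [AddCommGroup V] [Module F V] [AddCommGroup W] [Module F W]
    (Q : QuadraticForm F V) (Q' : QuadraticForm F W)
    (ψ : V ≃ₗ[F] W) (c : F) (hc : c ≠ 0) (hψ : ∀ x : V, c * Q x = Q' (ψ x))
    (g : CliffordAlgebra Q →ₗ[F] CliffordAlgebra Q')
    (hg_one : g 1 = 1)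
    -- the characterising product formula of the Clifford extension:
    (hg_mul : ∀ (i j : ZMod 2) (m n : CliffordAlgebra Q),
      m ∈ evenOdd Q i → n ∈ evenOdd Q j →
      g (m * n) = (c⁻¹) ^ (i.val * j.val) • (g m * g n))
    (u : (CliffordAlgebra Q)ˣ) (i : ZMod 2) (hu : (u : CliffordAlgebra Q) ∈ evenOdd Q i) :
    g (u : CliffordAlgebra Q) * g ((u⁻¹ : (CliffordAlgebra Q)ˣ) : CliffordAlgebra Q) =
        c ^ i.val • (1 : CliffordAlgebra Q') ∧
      IsUnit (g (u : CliffordAlgebra Q)) := by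
  have hinv : ((u⁻¹ : (CliffordAlgebra Q)ˣ) : CliffordAlgebra Q) ∈ evenOdd Q i :=
    inv_mem_evenOdd Q u i hu
  have hk : i.val * i.val = i.val := by
    rcases (by decide : ∀ j : ZMod 2, j = 0 ∨ j = 1) i with rfl | rfl <;> decide
  have hcancel : ∀ x : CliffordAlgebra Q',
      (1 : CliffordAlgebra Q') = (c⁻¹) ^ i.val • x → x = c ^ i.val • 1 := by
    intro x hx
    have h3 : (c ^ i.val * c⁻¹ ^ i.val) = 1 := by
      rw [← mul_pow, mul_inv_cancel₀ hc, one_pow]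
    calc x = (c ^ i.val * c⁻¹ ^ i.val) • x := by rw [h3, one_smul]
      _ = c ^ i.val • (c⁻¹ ^ i.val • x) := by rw [mul_smul]
      _ = c ^ i.val • 1 := by rw [← hx]
  have h1 : g (u : CliffordAlgebra Q) *
      g ((u⁻¹ : (CliffordAlgebra Q)ˣ) : CliffordAlgebra Q) = c ^ i.val • 1 := by
    apply hcancel
    have := hg_mul i i _ _ hu hinv
    rw [Units.mul_inv, hg_one, hk] at this
    exact this
  have h2 : g ((u⁻¹ : (CliffordAlgebra Q)ˣ) : CliffordAlgebra Q) *
      g (u : CliffordAlgebra Q) = c ^ i.val • 1 := by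
    apply hcancel
    have := hg_mul i i _ _ hinv hu
    rw [Units.inv_mul, hg_one, hk] at this
    exact this
  refine ⟨h1, isUnit_iff_exists.mpr ⟨(c⁻¹) ^ i.val • g ((u⁻¹ : (CliffordAlgebra Q)ˣ) : CliffordAlgebra Q), ?_, ?_⟩⟩
  · rw [mul_smul_comm, h1, smul_smul, ← mul_pow, inv_mul_cancel₀ hc, one_pow, one_smul]
  · rw [smul_mul_assoc, h2, smul_smul, ← mul_pow, inv_mul_cancel₀ hc, one_pow, one_smul]
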